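/- Fix d ≥ 1, a cost matrix C ∈ ℝ^{d×d}, ε > 0, and probability vectors μ₁, μ₂ ∈ ℝ^d with strictly positive entries. Let Π(μ₁,μ₂) := { M ∈ ℝ^{d×d} : M ≥ 0 entrywise, M𝟙 = μ₁, Mᵀ𝟙 = μ₂ } and f_ε(M) := ∑_{i,j}( C_{ij} M_{ij} + ε M_{ij} log M_{ij} ). If M* ∈ Π(μ₁,μ₂) has strictly positive entries and minimizes f_ε over Π(μ₁,μ₂), then M* is a diagonal scaling of the Gibbs kernel: there exist vectors v₁, v₂ ∈ ℝ^d with strictly positive entries such that M*_{ij} = (v₁)_i · exp(−C_{ij}/ε) · (v₂)_j for all i, j; equivalently, M* = diag(v₁) Γ diag(v₂) with Γ_{ij} := exp(−C_{ij}/ε). -/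

import Mathlib

/-- The transport polytope `Π(μ₁,μ₂)` of couplings of two probability vectors. -/
def transportPolytope (d : ℕ) (μ₁ μ₂ : Fin d → ℝ) : Set (Matrix (Fin d) (Fin d) ℝ) :=
  {M | (∀ i j, 0 ≤ M i j) ∧ (∀ i, ∑ j, M i j = μ₁ i) ∧ (∀ j, ∑ i, M i j = μ₂ j)}

/-- The Sinkhorn objective `f_ε(M) = ∑_{i,j} (C_{ij} M_{ij} + ε M_{ij} log M_{ij})`. -/
noncomputable def sinkhornObjective (d : ℕ) (C : Matrix (Fin d) (Fin d) ℝ) (ε : ℝ)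
    (M : Matrix (Fin d) (Fin d) ℝ) : ℝ :=
  ∑ i, ∑ j, (C i j * M i j + ε * (M i j * Real.log (M i j)))

lemma sumInd {d : ℕ} (g : Fin d → Fin d → ℝ) (i j : Fin d) :
    ∑ a, ∑ b, (if a = i ∧ b = j then (1:ℝ) else 0) * g a b = g i j := by
  have h : ∀ a b, (if a = i ∧ b = j then (1:ℝ) else 0) * g a b
      = if a = i then (if b = j then g i j else 0) else 0 := by
    intro a b; by_cases h1 : a = i <;> by_cases h2 : b = j <;> simp [h1, h2]
  simp [h]

lemma firstOrder (d : ℕ) (C : Matrix (Fin d) (Fin d) ℝ) (ε : ℝ) (hε : 0 < ε)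
    (μ₁ μ₂ : Fin d → ℝ)
    (Mstar : Matrix (Fin d) (Fin d) ℝ)
    (hMmem : Mstar ∈ transportPolytope d μ₁ μ₂)
    (hMpos : ∀ i j, 0 < Mstar i j)
    (hMmin : ∀ M' ∈ transportPolytope d μ₁ μ₂,
        sinkhornObjective d C ε Mstar ≤ sinkhornObjective d C ε M')
    (i j k l : Fin d) :
    (C i j + ε * Real.log (Mstar i j)) + (C k l + ε * Real.log (Mstar k l))
      = (C i l + ε * Real.log (Mstar i l)) + (C k j + ε * Real.log (Mstar k j)) := by
  classical
  set E : Matrix (Fin d) (Fin d) ℝ := fun a b =>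
    (if a = i ∧ b = j then (1:ℝ) else 0) + (if a = k ∧ b = l then 1 else 0)
    - (if a = i ∧ b = l then 1 else 0) - (if a = k ∧ b = j then 1 else 0) with hEdef
  have hE2 : ∀ a b, |E a b| ≤ 2 := by
    intro a b
    rw [abs_le]
    constructor <;> · simp only [hEdef]; split_ifs <;> norm_num
  have hrow1 : ∀ (i' j' : Fin d) (a : Fin d),
      ∑ b, (if a = i' ∧ b = j' then (1:ℝ) else 0) = if a = i' then 1 else 0 := by
    intro i' j' a
    by_cases h : a = i' <;> simp [h]
  have hcol1 : ∀ (i' j' : Fin d) (b : Fin d),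
      ∑ a, (if a = i' ∧ b = j' then (1:ℝ) else 0) = if b = j' then 1 else 0 := by
    intro i' j' b
    by_cases h : b = j' <;> simp [h]
  have hErow : ∀ a, ∑ b, E a b = 0 := by
    intro a
    simp only [hEdef, Finset.sum_sub_distrib, Finset.sum_add_distrib, hrow1]
    ring
  have hEcol : ∀ b, ∑ a, E a b = 0 := by
    intro b
    simp only [hEdef, Finset.sum_sub_distrib, Finset.sum_add_distrib, hcol1]
    ring
  -- minimum entry
  have hne : (Finset.univ : Finset (Fin d × Fin d)).Nonempty := ⟨(i, j), Finset.mem_univ _⟩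
  set m : ℝ := Finset.univ.inf' hne (fun p : Fin d × Fin d => Mstar p.1 p.2) with hmdef
  have hm : 0 < m := (Finset.lt_inf'_iff hne).mpr fun p _ => hMpos p.1 p.2
  have hmle : ∀ a b, m ≤ Mstar a b := fun a b =>
    Finset.inf'_le _ (Finset.mem_univ ((a, b) : Fin d × Fin d))
  have hmem : ∀ t : ℝ, |t| < m / 2 → Mstar + t • E ∈ transportPolytope d μ₁ μ₂ := by
    intro t ht
    refine ⟨fun a b => ?_, fun a => ?_, fun b => ?_⟩
    · have h1 : |t * E a b| ≤ |t| * 2 := by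
        rw [abs_mul]; exact mul_le_mul_of_nonneg_left (hE2 a b) (abs_nonneg t)
      have h2 := hmle a b
      have h3 := neg_abs_le (t * E a b)
      have h4 := abs_nonneg t
      simp only [Matrix.add_apply, Matrix.smul_apply, smul_eq_mul]
      nlinarith
    · simp only [Matrix.add_apply, Matrix.smul_apply, smul_eq_mul,
        Finset.sum_add_distrib, ← Finset.mul_sum, hErow, mul_zero, add_zero]
      exact hMmem.2.1 a
    · simp only [Matrix.add_apply, Matrix.smul_apply, smul_eq_mul,
        Finset.sum_add_distrib, ← Finset.mul_sum, hEcol, mul_zero, add_zero]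
      exact hMmem.2.2 b
  set φ : ℝ → ℝ := fun t => sinkhornObjective d C ε (Mstar + t • E) with hφdef
  have hlocal : IsLocalMin φ 0 := by
    have hmem0 : Set.Ioo (-(m / 2)) (m / 2) ∈ nhds (0 : ℝ) :=
      Ioo_mem_nhds (by linarith) (by linarith)
    refine Filter.eventually_of_mem hmem0 fun t ht => ?_
    have habs : |t| < m / 2 := abs_lt.mpr ⟨ht.1, ht.2⟩
    have h0 : Mstar + (0 : ℝ) • E = Mstar := by simp
    simp only [hφdef, h0]
    exact hMmin _ (hmem t habs)
  set D : ℝ := ∑ a, ∑ b, (C a b * E a b + ε * ((Real.log (Mstar a b) + 1) * E a b)) with hDdef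
  have hder : HasDerivAt φ D 0 := by
    have hφeq : φ = fun t => ∑ a, ∑ b, (C a b * (Mstar a b + t * E a b)
        + ε * ((Mstar a b + t * E a b) * Real.log (Mstar a b + t * E a b))) := by
      funext t
      simp [hφdef, sinkhornObjective, Matrix.add_apply, Matrix.smul_apply, smul_eq_mul]
    rw [hφeq, hDdef]
    apply HasDerivAt.fun_sum; intro a _
    apply HasDerivAt.fun_sum; intro b _
    have hu : HasDerivAt (fun t : ℝ => Mstar a b + t * E a b) (E a b) 0 :=
      (hasDerivAt_mul_const (E a b)).const_add (Mstar a b)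
    have hlog : HasDerivAt
        (fun t => (Mstar a b + t * E a b) * Real.log (Mstar a b + t * E a b))
        ((Real.log (Mstar a b) + 1) * E a b) 0 := by
      have h2 : HasDerivAt (fun x : ℝ => x * Real.log x) (Real.log (Mstar a b) + 1)
          ((fun t : ℝ => Mstar a b + t * E a b) 0) := by
        simpa using Real.hasDerivAt_mul_log (hMpos a b).ne'
      exact h2.comp 0 hu
    exact (hu.const_mul (C a b)).add (hlog.const_mul ε)
  have hD0 : D = 0 := by
    rw [← hder.deriv]
    exact hlocal.deriv_eq_zero
  -- compute D
  set g : Fin d → Fin d → ℝ := fun a b => C a b + ε * (Real.log (Mstar a b) + 1) with hgdef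
  have hDval : D = g i j + g k l - g i l - g k j := by
    have h1 : ∀ a b, C a b * E a b + ε * ((Real.log (Mstar a b) + 1) * E a b) =
        (if a = i ∧ b = j then (1:ℝ) else 0) * g a b
        + (if a = k ∧ b = l then (1:ℝ) else 0) * g a b
        - (if a = i ∧ b = l then (1:ℝ) else 0) * g a b
        - (if a = k ∧ b = j then (1:ℝ) else 0) * g a b := by
      intro a b; simp only [hEdef, hgdef]; ring
    rw [hDdef]
    simp only [h1, Finset.sum_sub_distrib, Finset.sum_add_distrib, sumInd]
  rw [hDval] at hD0
  simp only [hgdef] at hD0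
  linarith

/-- An entrywise positive minimizer `M*` of the entropy-regularized optimal transport
objective over `Π(μ₁,μ₂)` (with strictly positive marginals) is a diagonal scaling of
the Gibbs kernel: `M*_{ij} = (v₁)_i exp(−C_{ij}/ε) (v₂)_j` for some entrywise positive
vectors `v₁, v₂`, i.e. `M* = diag(v₁) Γ diag(v₂)` with `Γ_{ij} = exp(−C_{ij}/ε)`. -/
theorem stmt_9 (d : ℕ) (hd : 1 ≤ d) (C : Matrix (Fin d) (Fin d) ℝ) (ε : ℝ) (hε : 0 < ε)
    (μ₁ μ₂ : Fin d → ℝ) (hμ₁ : ∀ i, 0 < μ₁ i) (hμ₂ : ∀ i, 0 < μ₂ i)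
    (hs₁ : ∑ i, μ₁ i = 1) (hs₂ : ∑ i, μ₂ i = 1)
    (Mstar : Matrix (Fin d) (Fin d) ℝ)
    (hMmem : Mstar ∈ transportPolytope d μ₁ μ₂)
    (hMpos : ∀ i j, 0 < Mstar i j)
    (hMmin : ∀ M' ∈ transportPolytope d μ₁ μ₂,
        sinkhornObjective d C ε Mstar ≤ sinkhornObjective d C ε M') :
    ∃ v₁ v₂ : Fin d → ℝ, (∀ i, 0 < v₁ i) ∧ (∀ j, 0 < v₂ j) ∧
      (∀ i j, Mstar i j = v₁ i * Real.exp (-C i j / ε) * v₂ j)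
      ∧ Mstar = Matrix.diagonal v₁ * Matrix.of (fun i j => Real.exp (-C i j / ε))
          * Matrix.diagonal v₂ := by
  have i0 : Fin d := ⟨0, hd⟩
  set L : Fin d → Fin d → ℝ := fun a b => Real.log (Mstar a b) with hLdef
  have key : ∀ i j : Fin d,
      (C i j + ε * L i j) + (C i0 i0 + ε * L i0 i0)
        = (C i i0 + ε * L i i0) + (C i0 j + ε * L i0 j) := fun i j =>
    firstOrder d C ε hε μ₁ μ₂ Mstar hMmem hMpos hMmin i j i0 i0
  set v₁ : Fin d → ℝ := fun i => Real.exp (C i i0 / ε + L i i0) with hv1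
  set v₂ : Fin d → ℝ := fun j => Real.exp (C i0 j / ε + L i0 j - (C i0 i0 / ε + L i0 i0))
    with hv2
  have hform : ∀ i j, Mstar i j = v₁ i * Real.exp (-C i j / ε) * v₂ j := by
    intro i j
    rw [hv1, hv2, ← Real.exp_log (hMpos i j), ← Real.exp_add, ← Real.exp_add]
    congr 1
    have h := key i j
    have hεne : ε ≠ 0 := hε.ne'
    simp only [hLdef] at h ⊢
    field_simp
    linarith
  refine ⟨v₁, v₂, fun i => Real.exp_pos _, fun j => Real.exp_pos _, hform, ?_⟩
  ext i j
  rw [Matrix.mul_diagonal, Matrix.diagonal_mul, Matrix.of_apply]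
  exact hform i j
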